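/- Let π : X × Y → X be the projection of a product graph to its first factor, let Γ' be a finite subgraph of X × Y, let # be the counting measure on VΓ', and let π_*# be the push-forward measure on the projected subgraph π(Γ') ⊂ X. Then for all p ≥ 1 and 0 < α < 1/4, C^{p,α}(Γ', #) ≤ C^{p,α}(π(Γ'), π_*#). -/

import Mathlib

/-- The max-gradient of `f` at `x`: `sup` of `|f x - f y|` over neighbours `y`. -/
noncomputable def grad {V : Type*} (Adj : V → V → Prop) (f : V → ℝ) (x : V) : ℝ :=
  ⨆ y, ⨆ (_ : Adj x y), |f x - f y|

/-- The weighted `Lᵖ` norm `‖g‖_{μ,p} = (∑ |g x|^p μ x)^{1/p}`. -/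
noncomputable def wnorm {V : Type*} [Fintype V] (μ : V → ℝ) (p : ℝ) (g : V → ℝ) : ℝ :=
  (∑ x, |g x| ^ p * μ x) ^ (1 / p)

/-- The `(p,α)`-capacity of a finite weighted graph: infimum of
`μ(Γ)^{-1/p} ‖∇f‖_{μ,p}` over `f` with `μ{f ≤ 0} ≥ α μ(Γ)` and `μ{f ≥ 1} ≥ α μ(Γ)`. -/
noncomputable def capConst {V : Type*} [Fintype V] (p α : ℝ) (Adj : V → V → Prop)
    (μ : V → ℝ) : ℝ :=
  sInf { r | ∃ f : V → ℝ,
    (α * (∑ x, μ x) ≤ ∑ x, (if f x ≤ 0 then μ x else 0)) ∧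
    (α * (∑ x, μ x) ≤ ∑ x, (if 1 ≤ f x then μ x else 0)) ∧
    r = (∑ x, μ x) ^ (-(1 / p)) * wnorm μ p (grad Adj f) }

/-- The push-forward of the counting measure on `S ⊆ VX × VY` under the first
projection: `(π_*#)(v) = |π⁻¹(v) ∩ S|`. -/
noncomputable def pushMeasure {VX VY : Type*} [DecidableEq VX] (S : Finset (VX × VY))
    (v : ↥(S.image Prod.fst)) : ℝ :=
  ((S.filter fun z => z.1 = (v : VX)).card : ℝ)

lemma grad_nonneg {V : Type*} [Fintype V] (Adj : V → V → Prop) (f : V → ℝ) (x : V) :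
    0 ≤ grad Adj f x :=
  Real.iSup_nonneg fun _ => Real.iSup_nonneg fun _ => abs_nonneg _

lemma grad_le {V : Type*} [Fintype V] (Adj : V → V → Prop) (f : V → ℝ) (x y : V)
    (hxy : Adj x y) : |f x - f y| ≤ grad Adj f x := by
  rw [grad]
  have h1 : (⨆ _ : Adj x y, |f x - f y|) = |f x - f y| :=
    ciSup_pos hxy
  rw [← h1]
  exact le_ciSup (Set.Finite.bddAbove (Set.finite_range (fun y => ⨆ _ : Adj x y, |f x - f y|))) y

lemma fiber_sum {VX VY : Type*} [DecidableEq VX] (S : Finset (VX × VY))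
    (F : ↥(S.image Prod.fst) → ℝ) :
    ∑ z : ↥S, F ⟨(z : VX × VY).1, Finset.mem_image_of_mem Prod.fst z.2⟩
      = ∑ v, F v * pushMeasure S v := by
  classical
  have key : ∀ v : ↥(S.image Prod.fst),
      F v * pushMeasure S v = ∑ z : ↥S, if (z : VX × VY).1 = (v : VX) then F v else 0 := by
    intro v
    rw [pushMeasure]
    have : ((S.filter fun z => z.1 = (v : VX)).card : ℝ)
        = ∑ z : ↥S, if (z : VX × VY).1 = (v : VX) then (1:ℝ) else 0 := by
      rw [Finset.card_filter, ← Finset.sum_attach S (fun z => if z.1 = (v:VX) then (1:ℕ) else 0)]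
      push_cast
      simp
    rw [this, Finset.mul_sum]
    exact Finset.sum_congr rfl fun z _ => by split <;> ring
  rw [Finset.sum_congr rfl fun v _ => key v, Finset.sum_comm]
  apply Finset.sum_congr rfl
  intro z _
  rw [Finset.sum_eq_single (⟨(z : VX × VY).1, Finset.mem_image_of_mem Prod.fst z.2⟩ :
      ↥(S.image Prod.fst))]
  · simp
  · intro v _ hv
    exact if_neg (fun hc => hv (Subtype.ext hc.symm))
  · simp

/-- Projection is monotone for capacities: for any finite subgraph `Γ'` of the product
graph `X × Y` (induced on a vertex set `S`), and any `h` admissible for the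
`(p,α)`-capacity of the projected weighted subgraph `(π(Γ'), π_*#)` of `X`,
`C^{p,α}(Γ', #) ≤ (π_*#)(π Γ')^{-1/p} ‖∇h‖_{π_*#,p}`;
that is, `C^{p,α}(Γ', #) ≤ C^{p,α}(π(Γ'), π_*#)`. -/
theorem stmt7 {VX VY : Type*} [DecidableEq VX]
    (X : SimpleGraph VX) (Y : SimpleGraph VY) (S : Finset (VX × VY))
    (p α : ℝ) (hp : 1 ≤ p) (hα0 : 0 < α) (hα : α < 1 / 4)
    (h : ↥(S.image Prod.fst) → ℝ)
    (hle : α * (∑ v, pushMeasure S v) ≤ ∑ v, (if h v ≤ 0 then pushMeasure S v else 0))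
    (hge : α * (∑ v, pushMeasure S v) ≤ ∑ v, (if 1 ≤ h v then pushMeasure S v else 0)) :
    capConst p α (fun a b : ↥S => (X.boxProd Y).Adj a.1 b.1) (fun _ => (1 : ℝ))
      ≤ (∑ v, pushMeasure S v) ^ (-(1 / p)) *
        wnorm (pushMeasure S) p
          (grad (fun a b : ↥(S.image Prod.fst) => X.Adj (a : VX) (b : VX)) h) := by
  classical
  set AdjX := fun a b : ↥(S.image Prod.fst) => X.Adj (a : VX) (b : VX) with hAdjX
  set AdjS := fun a b : ↥S => (X.boxProd Y).Adj a.1 b.1 with hAdjS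
  set π : ↥S → ↥(S.image Prod.fst) :=
    fun z => ⟨(z : VX × VY).1, Finset.mem_image_of_mem Prod.fst z.2⟩ with hπ
  set f : ↥S → ℝ := fun z => h (π z) with hf
  set M := ∑ v, pushMeasure S v with hM
  have hpush_nonneg : ∀ v, 0 ≤ pushMeasure S v := fun v => Nat.cast_nonneg _
  have hM0 : 0 ≤ M := Finset.sum_nonneg fun v _ => hpush_nonneg v
  have hp0 : (0:ℝ) ≤ p := le_trans zero_le_one hp
  have hones : (∑ _z : ↥S, (1:ℝ)) = M := by
    have := fiber_sum S (fun _ => (1:ℝ))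
    rw [hM]
    simpa using this
  -- admissibility of f
  have hle' : α * (∑ _z : ↥S, (1:ℝ)) ≤ ∑ z : ↥S, (if f z ≤ 0 then (1:ℝ) else 0) := by
    rw [hones]
    calc α * M ≤ ∑ v, (if h v ≤ 0 then pushMeasure S v else 0) := hle
      _ = ∑ v, (if h v ≤ 0 then (1:ℝ) else 0) * pushMeasure S v :=
          Finset.sum_congr rfl fun v _ => by split <;> ring
      _ = ∑ z : ↥S, (if h (π z) ≤ 0 then (1:ℝ) else 0) :=
          (fiber_sum S (fun v => if h v ≤ 0 then (1:ℝ) else 0)).symm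
  have hge' : α * (∑ _z : ↥S, (1:ℝ)) ≤ ∑ z : ↥S, (if 1 ≤ f z then (1:ℝ) else 0) := by
    rw [hones]
    calc α * M ≤ ∑ v, (if 1 ≤ h v then pushMeasure S v else 0) := hge
      _ = ∑ v, (if 1 ≤ h v then (1:ℝ) else 0) * pushMeasure S v :=
          Finset.sum_congr rfl fun v _ => by split <;> ring
      _ = ∑ z : ↥S, (if 1 ≤ h (π z) then (1:ℝ) else 0) :=
          (fiber_sum S (fun v => if 1 ≤ h v then (1:ℝ) else 0)).symm
  -- gradient comparison
  have hgrad : ∀ z : ↥S, grad AdjS f z ≤ grad AdjX h (π z) := by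
    intro z
    rw [grad]
    refine Real.iSup_le (fun w => Real.iSup_le (fun hadj => ?_) (grad_nonneg _ _ _))
      (grad_nonneg _ _ _)
    rcases (SimpleGraph.boxProd_adj).mp hadj with ⟨hX, _⟩ | ⟨_, hfst⟩
    · have : f z - f w = h (π z) - h (π w) := rfl
      rw [this]
      exact grad_le AdjX h (π z) (π w) hX
    · have hzw : π z = π w := Subtype.ext hfst
      have : f z - f w = 0 := by rw [hf]; simp [hzw]
      rw [this, abs_zero]
      exact grad_nonneg _ _ _
  -- capConst ≤ value of f
  have hmem : (∑ _z : ↥S, (1:ℝ)) ^ (-(1 / p)) * wnorm (fun _ => (1:ℝ)) p (grad AdjS f)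
      ∈ { r | ∃ g : ↥S → ℝ,
        (α * (∑ x : ↥S, (1:ℝ)) ≤ ∑ x : ↥S, (if g x ≤ 0 then (1:ℝ) else 0)) ∧
        (α * (∑ x : ↥S, (1:ℝ)) ≤ ∑ x : ↥S, (if 1 ≤ g x then (1:ℝ) else 0)) ∧
        r = (∑ x : ↥S, (1:ℝ)) ^ (-(1 / p)) * wnorm (fun _ => (1:ℝ)) p (grad AdjS g) } :=
    ⟨f, hle', hge', rfl⟩
  have hbdd : BddBelow { r | ∃ g : ↥S → ℝ,
        (α * (∑ x : ↥S, (1:ℝ)) ≤ ∑ x : ↥S, (if g x ≤ 0 then (1:ℝ) else 0)) ∧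
        (α * (∑ x : ↥S, (1:ℝ)) ≤ ∑ x : ↥S, (if 1 ≤ g x then (1:ℝ) else 0)) ∧
        r = (∑ x : ↥S, (1:ℝ)) ^ (-(1 / p)) * wnorm (fun _ => (1:ℝ)) p (grad AdjS g) } := by
    refine ⟨0, fun r hr => ?_⟩
    obtain ⟨g, _, _, hr⟩ := hr
    rw [hr]
    apply mul_nonneg (Real.rpow_nonneg (by positivity) _)
    exact Real.rpow_nonneg (Finset.sum_nonneg fun x _ => by positivity) _
  have hcap : capConst p α AdjS (fun _ => (1:ℝ))
      ≤ (∑ _z : ↥S, (1:ℝ)) ^ (-(1 / p)) * wnorm (fun _ => (1:ℝ)) p (grad AdjS f) :=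
    csInf_le hbdd hmem
  refine le_trans hcap ?_
  rw [hones]
  apply mul_le_mul_of_nonneg_left _ (Real.rpow_nonneg hM0 _)
  rw [wnorm, wnorm]
  apply Real.rpow_le_rpow (Finset.sum_nonneg fun x _ => by positivity)
  · calc ∑ z : ↥S, |grad AdjS f z| ^ p * 1
        ≤ ∑ z : ↥S, |grad AdjX h (π z)| ^ p * 1 := by
          refine Finset.sum_le_sum fun z _ => ?_
          rw [mul_one, mul_one, abs_of_nonneg (grad_nonneg _ _ _),
            abs_of_nonneg (grad_nonneg _ _ _)]
          exact Real.rpow_le_rpow (grad_nonneg _ _ _) (hgrad z) hp0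
      _ = ∑ v, |grad AdjX h v| ^ p * pushMeasure S v := by
          rw [← fiber_sum S (fun v => |grad AdjX h v| ^ p)]
          simp
          rfl
  · positivity
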